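/- Let p be a prime, n ≥ 2, 1 ≤ k ≤ n-1 with (p-1) ∣ k, and let r ∈ {0,...,p-2} with r ≡ n (mod p-1). Then the sum a = ∑_{1 ≤ j ≤ k, j ≡ r (mod p-1)} C(k,j) satisfies a ≡ (-1)^n (mod p). -/

import Mathlib

open Finset

-- parity transfer helper
lemma negpow {R : Type*} [Monoid R] [HasDistribNeg R] {a b : ℕ} (h : a % 2 = b % 2) :
    (-1 : R) ^ a = (-1) ^ b := by
  rcases Nat.even_or_odd a with ha | ha
  · have hb : Even b := by rw [Nat.even_iff] at *; omega
    rw [ha.neg_one_pow, hb.neg_one_pow]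
  · have hb : Odd b := by rw [Nat.odd_iff] at *; omega
    rw [ha.neg_one_pow, hb.neg_one_pow]

theorem stmt_11 (p n k r : ℕ) (hp : p.Prime) (hn : 2 ≤ n)
    (hk1 : 1 ≤ k) (hk2 : k ≤ n - 1) (hdvd : (p - 1) ∣ k)
    (hr : r ≤ p - 2) (hrn : r ≡ n [MOD p - 1]) :
    ((∑ j ∈ (Finset.Icc 1 k).filter (fun j => j ≡ r [MOD p - 1]), k.choose j : ℕ) :
      ZMod p) = (-1) ^ n := by
  rcases eq_or_lt_of_le hp.two_le with h2 | h2
  · -- p = 2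
    subst h2
    have hfil : (Finset.Icc 1 k).filter (fun j => j ≡ r [MOD 2 - 1]) = Finset.Icc 1 k := by
      apply Finset.filter_true_of_mem
      intro j _
      exact Nat.modEq_one
    rw [hfil]
    have hins : Finset.range (k+1) = insert 0 (Finset.Icc 1 k) := by
      ext a; simp [Nat.lt_succ_iff]; omega
    have hsum : ∑ j ∈ Finset.Icc 1 k, k.choose j = 2 ^ k - 1 := by
      have h := Nat.sum_range_choose k
      rw [hins, Finset.sum_insert (by simp)] at h
      simp at h
      omega
    rw [hsum]
    have h1 : (1:ℕ) ≤ 2 ^ k := Nat.one_le_two_pow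
    have : ((2 ^ k - 1 : ℕ) : ZMod 2) = (2:ZMod 2) ^ k - 1 := by
      push_cast [h1]; ring
    rw [this]
    have : (2 : ZMod 2) = 0 := by decide
    rw [this, zero_pow (by omega), zero_sub]
    have : (-1 : ZMod 2) = 1 := by decide
    rw [this, one_pow]
  · -- p odd
    haveI : Fact p.Prime := ⟨hp⟩
    set m := p - 1 with hm
    have hm2 : 2 ≤ m := by omega
    have hrm : r < m := by omega
    have hpodd : Odd p := hp.odd_of_ne_two (by omega)
    have hmeven : Even m := Nat.Odd.sub_odd hpodd odd_one
    set s := m - r with hs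
    have hsr : s + r = m := by omega
    have hs1 : 1 ≤ s := by omega
    -- the key character sum
    set T : ZMod p := ∑ a : (ZMod p)ˣ, ((a : ZMod p)) ^ s * ((a : ZMod p) + 1) ^ k with hT
    -- first evaluation
    have hdvd_iff : ∀ j : ℕ, (m ∣ s + j) ↔ (j ≡ r [MOD m]) := by
      intro j
      constructor
      · intro h
        have h1 : s + j ≡ s + r [MOD m] := by
          rw [hsr, Nat.add_comm s j]
          calc j + s ≡ 0 [MOD m] := (Nat.modEq_zero_iff_dvd).2 (by rwa [Nat.add_comm])
          _ ≡ m [MOD m] := (Nat.modEq_zero_iff_dvd.2 dvd_rfl).symm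
        exact Nat.ModEq.add_left_cancel' s h1
      · intro h
        have h1 : s + j ≡ s + r [MOD m] := Nat.ModEq.add_left s h
        rw [hsr] at h1
        have : s + j ≡ 0 [MOD m] := h1.trans (Nat.modEq_zero_iff_dvd.2 dvd_rfl)
        exact Nat.modEq_zero_iff_dvd.1 this
    have hcard : Fintype.card (ZMod p) - 1 = m := by rw [ZMod.card]
    have hT1 : T = -∑ j ∈ (Finset.range (k+1)).filter (fun j => j ≡ r [MOD m]),
        (k.choose j : ZMod p) := by
      rw [hT]
      have step : ∀ a : (ZMod p)ˣ, ((a : ZMod p)) ^ s * ((a : ZMod p) + 1) ^ k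
          = ∑ j ∈ Finset.range (k+1), ((a:ZMod p)) ^ (s + j) * (k.choose j : ZMod p) := by
        intro a
        rw [add_pow, Finset.mul_sum]
        apply Finset.sum_congr rfl
        intro j _
        rw [pow_add]
        ring
      rw [Finset.sum_congr rfl (fun a _ => step a), Finset.sum_comm]
      have inner : ∀ j : ℕ, ∑ a : (ZMod p)ˣ, ((a:ZMod p)) ^ (s+j) * (k.choose j : ZMod p)
          = (if m ∣ (s+j) then (-1:ZMod p) else 0) * (k.choose j : ZMod p) := by
        intro j
        rw [← Finset.sum_mul]
        congr 1
        have := FiniteField.sum_pow_units (ZMod p) (s + j)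
        rw [hcard] at this
        rw [← this]
      rw [Finset.sum_congr rfl (fun j _ => inner j)]
      rw [← Finset.sum_filter_add_sum_filter_not (Finset.range (k+1)) (fun j => j ≡ r [MOD m])]
      have e1 : ∑ j ∈ (Finset.range (k+1)).filter (fun j => j ≡ r [MOD m]),
          (if m ∣ (s+j) then (-1:ZMod p) else 0) * (k.choose j : ZMod p)
          = -∑ j ∈ (Finset.range (k+1)).filter (fun j => j ≡ r [MOD m]), (k.choose j : ZMod p) := by
        rw [← Finset.sum_neg_distrib]
        apply Finset.sum_congr rfl
        intro j hj
        rw [Finset.mem_filter] at hj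
        rw [if_pos ((hdvd_iff j).2 hj.2)]
        ring
      have e2 : ∑ j ∈ (Finset.range (k+1)).filter (fun j => ¬ j ≡ r [MOD m]),
          (if m ∣ (s+j) then (-1:ZMod p) else 0) * (k.choose j : ZMod p) = 0 := by
        apply Finset.sum_eq_zero
        intro j hj
        rw [Finset.mem_filter] at hj
        rw [if_neg (fun h => hj.2 ((hdvd_iff j).1 h))]
        ring
      rw [e1, e2, add_zero]
    -- second evaluation
    have hT2 : T = (if m ∣ s then (-1:ZMod p) else 0) - (-1) ^ s := by
      rw [hT]
      have hmem : (-1 : (ZMod p)ˣ) ∈ (Finset.univ : Finset (ZMod p)ˣ) := Finset.mem_univ _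
      rw [← Finset.sum_subset (Finset.subset_univ (Finset.univ.erase (-1 : (ZMod p)ˣ)))]
      swap
      · intro a _ ha
        have : a = -1 := by
          by_contra h
          exact ha (Finset.mem_erase.2 ⟨h, Finset.mem_univ _⟩)
        subst this
        have : ((-1 : (ZMod p)ˣ) : ZMod p) = -1 := by simp
        rw [this, neg_add_cancel, zero_pow (by omega), mul_zero]
      have step : ∀ a ∈ Finset.univ.erase (-1 : (ZMod p)ˣ),
          ((a:ZMod p)) ^ s * ((a:ZMod p) + 1) ^ k = ((a:ZMod p)) ^ s := by
        intro a ha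
        have hane : a ≠ -1 := (Finset.mem_erase.1 ha).1
        have hne : (a : ZMod p) + 1 ≠ 0 := by
          intro h
          apply hane
          ext
          rw [Units.val_neg, Units.val_one]
          linear_combination h
        obtain ⟨t, ht⟩ := hdvd
        rw [ht, pow_mul, ZMod.pow_card_sub_one_eq_one hne, one_pow, mul_one]
      rw [Finset.sum_congr rfl step]
      have : ∑ a ∈ Finset.univ.erase (-1 : (ZMod p)ˣ), ((a:ZMod p)) ^ s
          = (∑ a : (ZMod p)ˣ, ((a:ZMod p)) ^ s) - (-1) ^ s := by
        rw [← Finset.sum_erase_add Finset.univ _ hmem]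
        have : (((-1 : (ZMod p)ˣ) : ZMod p)) ^ s = (-1:ZMod p) ^ s := by simp
        rw [this]
        ring
      rw [this]
      congr 1
      have := FiniteField.sum_pow_units (ZMod p) s
      rw [hcard] at this
      rw [← this]
    -- parity facts
    have h2m : 2 ∣ m := hmeven.two_dvd
    have hparrn : r % 2 = n % 2 := Nat.ModEq.of_dvd h2m hrn
    have hparsr : s % 2 = r % 2 := by
      have := hmeven
      rw [Nat.even_iff] at this
      omega
    -- now case split on r
    rcases Nat.eq_zero_or_pos r with hr0 | hr0
    · subst hr0
      -- filter over range = insert 0 (filter over Icc)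
      have hset : (Finset.range (k+1)).filter (fun j => j ≡ 0 [MOD m])
          = insert 0 ((Finset.Icc 1 k).filter (fun j => j ≡ 0 [MOD m])) := by
        ext a
        simp only [Finset.mem_filter, Finset.mem_range, Finset.mem_insert, Finset.mem_Icc,
          Nat.lt_succ_iff]
        constructor
        · rintro ⟨h1, h2⟩
          rcases Nat.eq_zero_or_pos a with h | h
          · exact Or.inl h
          · exact Or.inr ⟨⟨h, h1⟩, h2⟩
        · rintro (h | ⟨⟨h1, h2⟩, h3⟩)
          · subst h; exact ⟨Nat.zero_le _, Nat.ModEq.refl _⟩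
          · exact ⟨h2, h3⟩
      have hnotmem : (0:ℕ) ∉ (Finset.Icc 1 k).filter (fun j => j ≡ 0 [MOD m]) := by simp
      have hsm : s = m := by omega
      have hms : m ∣ s := hsm ▸ dvd_rfl
      have hTval : T = -2 := by
        rw [hT2, if_pos hms, hsm, hmeven.neg_one_pow]
        ring
      rw [hT1, hset, Finset.sum_insert hnotmem] at hTval
      have hA : (∑ j ∈ (Finset.Icc 1 k).filter (fun j => j ≡ 0 [MOD m]),
          (k.choose j : ZMod p)) = 1 := by
        simp only [Nat.choose_zero_right, Nat.cast_one] at hTval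
        linear_combination -hTval
      rw [Nat.cast_sum, hA]
      have hneven : Even n := by rw [Nat.even_iff]; omega
      rw [hneven.neg_one_pow]
    · -- r ≥ 1
      have hset : (Finset.range (k+1)).filter (fun j => j ≡ r [MOD m])
          = (Finset.Icc 1 k).filter (fun j => j ≡ r [MOD m]) := by
        ext a
        simp only [Finset.mem_filter, Finset.mem_range, Finset.mem_Icc, Nat.lt_succ_iff]
        constructor
        · rintro ⟨h1, h2⟩
          refine ⟨⟨?_, h1⟩, h2⟩
          rcases Nat.eq_zero_or_pos a with h | h
          · exfalso
            subst h
            have : m ∣ r := (Nat.modEq_zero_iff_dvd).1 h2.symm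
            have := Nat.le_of_dvd hr0 this
            omega
          · exact h
        · rintro ⟨⟨h1, h2⟩, h3⟩
          exact ⟨h2, h3⟩
      have hms : ¬ m ∣ s := by
        intro h
        have := Nat.le_of_dvd (by omega) h
        omega
      have hTval : T = -(-1:ZMod p) ^ s := by
        rw [hT2, if_neg hms]; ring
      rw [hT1, hset] at hTval
      have hA : (∑ j ∈ (Finset.Icc 1 k).filter (fun j => j ≡ r [MOD m]),
          (k.choose j : ZMod p)) = (-1) ^ s := by
        linear_combination -hTval
      rw [Nat.cast_sum, hA]
      exact negpow (a := s) (b := n) (by omega)
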